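/- Let θ = (W_L, ..., W_1) with product W = μ(θ). The rank of the differential map dμ(θ)(Δθ) = Σ_{j=1}^{L} W_{L∼j} ΔW_j W_{j−1∼0} (as a linear map from the weight space to ℝ^{d_L × d_0}) equals Σ_{j=1}^{L} rk W_{L∼j} · rk W_{j−1∼0} − Σ_{j=1}^{L−1} rk W_{L∼j} · rk W_{j∼0}. -/

import Mathlib

open Matrix

/-- The subsequence matrix `W_{k∼i} = W_k W_{k−1} ⋯ W_{i+1}` of a linear neural network.
Here `W j` is the matrix of edge layer `j+1` (mapping unit layer `j` to unit layer `j+1`),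
so `subseq d W i k` is the product of the edge-layer matrices carrying unit layer `i`
to unit layer `k`.  By convention `subseq d W k k` is the identity, and values with
`k < i` are junk. -/
noncomputable def subseq (d : ℕ → ℕ)
    (W : ∀ j : ℕ, Matrix (Fin (d (j + 1))) (Fin (d j)) ℝ) (i : ℕ) :
    (k : ℕ) → Matrix (Fin (d k)) (Fin (d i)) ℝ
  | 0 =>
    if h : i = 0 then
      (1 : Matrix (Fin (d 0)) (Fin (d 0)) ℝ).submatrix id (Fin.cast (congrArg d h))
    else 0
  | k + 1 =>
    if h : i = k + 1 then
      (1 : Matrix (Fin (d (k + 1))) (Fin (d (k + 1))) ℝ).submatrix id (Fin.cast (congrArg d h))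
    else W k * subseq d W i k

/-- The differential map `dμ(θ) : (ΔW_L, …, ΔW_1) ↦ Σ_{j=1}^{L} W_{L∼j} ΔW_j W_{j−1∼0}`
of the matrix multiplication map at `θ = (W_L, …, W_1)`, as a linear map from the
weight space to `ℝ^{d_L × d_0}`.  Edge layer `j` of the paper is index `j0 = j − 1`. -/
noncomputable def dmu (L : ℕ) (d : ℕ → ℕ)
    (W : ∀ j : ℕ, Matrix (Fin (d (j + 1))) (Fin (d j)) ℝ) :
    (∀ j0 : Fin L, Matrix (Fin (d (j0.1 + 1))) (Fin (d j0.1)) ℝ)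
      →ₗ[ℝ] Matrix (Fin (d L)) (Fin (d 0)) ℝ where
  toFun Δ := ∑ j0 : Fin L, subseq d W (j0.1 + 1) L * Δ j0 * subseq d W 0 j0.1
  map_add' a b := by
    simp only [Pi.add_apply, Matrix.mul_add, Matrix.add_mul]
    rw [Finset.sum_add_distrib]
  map_smul' c a := by
    simp only [Pi.smul_apply, Matrix.mul_smul, Matrix.smul_mul, RingHom.id_apply]
    rw [Finset.smul_sum]

namespace RankDmuAux
open Matrix Module
set_option linter.unusedSectionVars false

section Generic
variable {m n p q : Type*} [Fintype m] [Fintype n] [Fintype p] [Fintype q]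

lemma ext_mulVec [DecidableEq n] {X Y : Matrix m n ℝ} (h : ∀ v, X *ᵥ v = Y *ᵥ v) : X = Y := by
  ext i j
  have := congrFun (h (Pi.single j 1)) i
  simpa [Matrix.mulVec_single] using this

/-- existence of a generalized inverse acting on the column space -/
lemma exists_genInv (A : Matrix m p ℝ) :
    ∃ G : Matrix p m ℝ, ∀ y ∈ LinearMap.range A.mulVecLin, A *ᵥ (G *ᵥ y) = y := by
  classical
  set f := A.mulVecLin with hf
  obtain ⟨g, hg⟩ := LinearMap.exists_rightInverse_of_surjective f.rangeRestrict
    (LinearMap.range_rangeRestrict f)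
  obtain ⟨Uc, hc⟩ := Submodule.exists_isCompl (LinearMap.range f)
  let π := (LinearMap.range f).linearProjOfIsCompl Uc hc
  let h : (m → ℝ) →ₗ[ℝ] (p → ℝ) := g ∘ₗ π
  refine ⟨LinearMap.toMatrix' h, ?_⟩
  intro y hy
  have h1 : (LinearMap.toMatrix' h) *ᵥ y = h y := by
    rw [← Matrix.toLin'_apply, Matrix.toLin'_toMatrix']
  rw [h1]
  have h2 : π y = ⟨y, hy⟩ := Submodule.linearProjOfIsCompl_apply_left hc ⟨y, hy⟩
  have h3 : A *ᵥ (g ⟨y, hy⟩) = f (g ⟨y, hy⟩) := rfl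
  have h4 : f.rangeRestrict (g ⟨y, hy⟩) = ⟨y, hy⟩ := by
    rw [← LinearMap.comp_apply, hg]; rfl
  have h5 : f (g ⟨y, hy⟩) = ((f.rangeRestrict (g ⟨y, hy⟩)) : m → ℝ) := rfl
  show A *ᵥ (g (π y)) = y
  rw [h2, h3, h5, h4]

/-- The subspace of matrices with column space in `U` and row space in `V`. -/
def Tsub (U : Submodule ℝ (m → ℝ)) (V : Submodule ℝ (n → ℝ)) : Submodule ℝ (Matrix m n ℝ) where
  carrier := {M | (∀ x, M *ᵥ x ∈ U) ∧ (∀ x, Mᵀ *ᵥ x ∈ V)}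
  add_mem' := by
    rintro a b ⟨ha1, ha2⟩ ⟨hb1, hb2⟩
    refine ⟨fun x => ?_, fun x => ?_⟩
    · rw [Matrix.add_mulVec]; exact U.add_mem (ha1 x) (hb1 x)
    · rw [Matrix.transpose_add, Matrix.add_mulVec]; exact V.add_mem (ha2 x) (hb2 x)
  zero_mem' := by
    refine ⟨fun x => ?_, fun x => ?_⟩ <;> simp
  smul_mem' := by
    rintro c a ⟨ha1, ha2⟩
    refine ⟨fun x => ?_, fun x => ?_⟩
    · rw [Matrix.smul_mulVec]; exact U.smul_mem c (ha1 x)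
    · rw [Matrix.transpose_smul, Matrix.smul_mulVec]; exact V.smul_mem c (ha2 x)

lemma Tsub_mono {U U' : Submodule ℝ (m → ℝ)} {V V' : Submodule ℝ (n → ℝ)}
    (hU : U ≤ U') (hV : V ≤ V') : Tsub U V ≤ Tsub U' V' := by
  rintro M ⟨h1, h2⟩; exact ⟨fun x => hU (h1 x), fun x => hV (h2 x)⟩

lemma Tsub_inf {U : Submodule ℝ (m → ℝ)} {V : Submodule ℝ (n → ℝ)} :
    Tsub U ⊤ ⊓ Tsub ⊤ V = Tsub U V := by
  ext M
  constructor
  · rintro ⟨⟨h1, _⟩, ⟨_, h2⟩⟩; exact ⟨h1, h2⟩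
  · rintro ⟨h1, h2⟩; exact ⟨⟨h1, fun _ => trivial⟩, ⟨fun _ => trivial, h2⟩⟩

/-- The conjugation map `B ↦ A * B * C`. -/
def conjMap (A : Matrix m p ℝ) (C : Matrix q n ℝ) : Matrix p q ℝ →ₗ[ℝ] Matrix m n ℝ where
  toFun B := A * B * C
  map_add' a b := by simp only [Matrix.mul_add, Matrix.add_mul]
  map_smul' c a := by simp only [Matrix.mul_smul, Matrix.smul_mul, RingHom.id_apply]

lemma range_conjMap [DecidableEq m] [DecidableEq n] [DecidableEq p] [DecidableEq q]
    (A : Matrix m p ℝ) (C : Matrix q n ℝ) :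
    LinearMap.range (conjMap A C) =
      Tsub (LinearMap.range A.mulVecLin) (LinearMap.range Cᵀ.mulVecLin) := by
  apply le_antisymm
  · rintro M ⟨B, rfl⟩
    constructor
    · intro x
      refine ⟨(B * C) *ᵥ x, ?_⟩
      show A *ᵥ ((B * C) *ᵥ x) = (A * B * C) *ᵥ x
      rw [Matrix.mulVec_mulVec, Matrix.mul_assoc]
    · intro x
      refine ⟨(Bᵀ * Aᵀ) *ᵥ x, ?_⟩
      show Cᵀ *ᵥ ((Bᵀ * Aᵀ) *ᵥ x) = (A * B * C)ᵀ *ᵥ x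
      rw [Matrix.mulVec_mulVec, Matrix.transpose_mul, Matrix.transpose_mul]
  · rintro M ⟨hcol, hrow⟩
    obtain ⟨G, hG⟩ := exists_genInv A
    obtain ⟨K, hK⟩ := exists_genInv Cᵀ
    have step1 : A * G * M = M := by
      apply ext_mulVec
      intro v
      rw [← Matrix.mulVec_mulVec, ← Matrix.mulVec_mulVec]
      exact hG _ (hcol v)
    have step2 : Cᵀ * K * Mᵀ = Mᵀ := by
      apply ext_mulVec
      intro v
      rw [← Matrix.mulVec_mulVec, ← Matrix.mulVec_mulVec]
      exact hK _ (hrow v)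
    have step3 : M * Kᵀ * C = M := by
      have := congrArg Matrix.transpose step2
      simpa [Matrix.transpose_mul, Matrix.mul_assoc] using this
    refine ⟨G * M * Kᵀ, ?_⟩
    show A * (G * M * Kᵀ) * C = M
    calc A * (G * M * Kᵀ) * C = (A * G * M) * Kᵀ * C := by
          simp only [Matrix.mul_assoc]
      _ = M := by rw [step1, step3]

lemma conjMap_injective [DecidableEq m] [DecidableEq n] [DecidableEq p] [DecidableEq q]
    {A : Matrix m p ℝ} {C : Matrix q n ℝ}
    (hA : Function.Injective A.mulVecLin) (hC : Function.Injective Cᵀ.mulVecLin) :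
    Function.Injective (conjMap A C) := by
  rw [← LinearMap.ker_eq_bot, LinearMap.ker_eq_bot']
  intro B hB
  have hB' : A * B * C = 0 := hB
  have h1 : B * C = 0 := by
    apply ext_mulVec
    intro v
    have : A.mulVecLin ((B * C) *ᵥ v) = A.mulVecLin ((0 : Matrix p n ℝ) *ᵥ v) := by
      simp only [Matrix.mulVecLin_apply, Matrix.mulVec_mulVec, ← Matrix.mul_assoc, hB',
        Matrix.zero_mulVec, Matrix.mulVec_zero, Matrix.zero_mul, Matrix.mul_zero]
    exact hA this
  have h2 : Cᵀ * Bᵀ = 0 := by rw [← Matrix.transpose_mul, h1, Matrix.transpose_zero]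
  have h3 : Bᵀ = 0 := by
    apply ext_mulVec
    intro v
    have : Cᵀ.mulVecLin (Bᵀ *ᵥ v) = Cᵀ.mulVecLin ((0 : Matrix q p ℝ) *ᵥ v) := by
      simp only [Matrix.mulVecLin_apply, Matrix.mulVec_mulVec, h2,
        Matrix.zero_mulVec, Matrix.mulVec_zero]
    have h4 := hC this
    simpa using h4
  have := congrArg Matrix.transpose h3
  simpa using this

/-- matrix whose columns are a given basis of a submodule -/
noncomputable def fromBasis {ι : Type*} [Fintype ι] {U : Submodule ℝ (m → ℝ)}
    (b : Basis ι ℝ U) : Matrix m ι ℝ := Matrix.of fun i k => (b k : m → ℝ) i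

lemma mulVecLin_fromBasis {ι : Type*} [Fintype ι] {U : Submodule ℝ (m → ℝ)} (b : Basis ι ℝ U) :
    (fromBasis b).mulVecLin = U.subtype ∘ₗ (b.equivFun.symm : (ι → ℝ) →ₗ[ℝ] U) := by
  apply LinearMap.ext
  intro x
  funext i
  simp only [Matrix.mulVecLin_apply, Matrix.mulVec, dotProduct, fromBasis,
    LinearMap.comp_apply, Matrix.of_apply, LinearEquiv.coe_coe]
  have h1 : ((U.subtype (b.equivFun.symm x)) : m → ℝ) = ∑ k, x k • (b k : m → ℝ) := by
    rw [show U.subtype (b.equivFun.symm x) = ((∑ k, x k • b k : U) : m → ℝ) by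
      rw [Basis.equivFun_symm_apply]; rfl]
    push_cast
    rfl
  have h2 := congrFun h1 i
  rw [h2, Finset.sum_apply]
  simp [mul_comm]

lemma range_fromBasis {ι : Type*} [Fintype ι] {U : Submodule ℝ (m → ℝ)} (b : Basis ι ℝ U) :
    LinearMap.range (fromBasis b).mulVecLin = U := by
  rw [mulVecLin_fromBasis, LinearMap.range_comp, LinearEquiv.range, Submodule.map_top,
    Submodule.range_subtype]

lemma injective_fromBasis {ι : Type*} [Fintype ι] {U : Submodule ℝ (m → ℝ)} (b : Basis ι ℝ U) :
    Function.Injective (fromBasis b).mulVecLin := by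
  rw [mulVecLin_fromBasis]
  exact (Submodule.injective_subtype U).comp b.equivFun.symm.injective

lemma finrank_Tsub [DecidableEq m] [DecidableEq n]
    (U : Submodule ℝ (m → ℝ)) (V : Submodule ℝ (n → ℝ)) :
    finrank ℝ (Tsub U V) = finrank ℝ U * finrank ℝ V := by
  classical
  let b := Module.finBasis ℝ U
  let c := Module.finBasis ℝ V
  let A := fromBasis b
  let C := (fromBasis c)ᵀ
  have hrange : LinearMap.range (conjMap A C) = Tsub U V := by
    rw [range_conjMap, range_fromBasis b]
    congr 1
    rw [show Cᵀ = fromBasis c from Matrix.transpose_transpose _, range_fromBasis c]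
  have hinj : Function.Injective (conjMap A C) :=
    conjMap_injective (injective_fromBasis b)
      (by rw [show Cᵀ = fromBasis c from Matrix.transpose_transpose _]
          exact injective_fromBasis c)
  have h := LinearMap.finrank_range_of_inj hinj
  rw [hrange] at h
  rw [h, Module.finrank_matrix]
  simp

lemma colSpace_mul_le [Fintype n] (A : Matrix m n ℝ) (B : Matrix n p ℝ) :
    LinearMap.range (A * B).mulVecLin ≤ LinearMap.range A.mulVecLin := by
  rintro _ ⟨x, rfl⟩
  exact ⟨B *ᵥ x, by simp [Matrix.mulVecLin_apply, Matrix.mulVec_mulVec]⟩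

lemma sum_submodule_eq_sup {ι M : Type*} [AddCommMonoid M] [Module ℝ M]
    (s : Finset ι) (f : ι → Submodule ℝ M) : ∑ i ∈ s, f i = s.sup f := by
  classical
  induction s using Finset.induction_on with
  | empty => simp
  | insert _ _ hx ih => rw [Finset.sum_insert hx, Finset.sup_insert, ih, Submodule.add_eq_sup]

end Generic
end RankDmuAux
namespace RankDmuAux
open Matrix Module

section Subseq
variable (d : ℕ → ℕ) (W : ∀ j : ℕ, Matrix (Fin (d (j + 1))) (Fin (d j)) ℝ)

lemma subseq_self (i : ℕ) : subseq d W i i = 1 := by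
  have key : ∀ (a : ℕ) (h : d a = d a),
      (1 : Matrix (Fin (d a)) (Fin (d a)) ℝ).submatrix id (Fin.cast h) = 1 := by
    intro a h
    have : Fin.cast h = id := funext fun x => Fin.ext rfl
    rw [this, Matrix.submatrix_id_id]
  cases i with
  | zero => rw [subseq, dif_pos rfl]; exact key 0 _
  | succ k => rw [subseq, dif_pos rfl]; exact key (k + 1) _

lemma subseq_succ (i k : ℕ) (h : i ≤ k) :
    subseq d W i (k + 1) = W k * subseq d W i k := by
  rw [subseq, dif_neg (by omega)]

lemma subseq_peel (i : ℕ) : ∀ k, i < k →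
    subseq d W i k = subseq d W (i + 1) k * W i := by
  intro k
  induction k with
  | zero => omega
  | succ k ih =>
    intro h
    rcases Nat.lt_or_ge i k with hk | hk
    · rw [subseq_succ d W i k (le_of_lt hk), subseq_succ d W (i + 1) k hk, ih hk,
        Matrix.mul_assoc]
    · have hik : i = k := by omega
      subst hik
      rw [subseq_succ d W i i le_rfl, subseq_self, subseq_self, Matrix.mul_one,
        Matrix.one_mul]

lemma colSpace_subseq_mono {i i' L : ℕ} (h1 : i ≤ i') (h2 : i' ≤ L) :
    LinearMap.range (subseq d W i L).mulVecLin ≤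
      LinearMap.range (subseq d W i' L).mulVecLin := by
  induction i', h1 using Nat.le_induction with
  | base => exact le_rfl
  | succ i' hii' ih =>
    have h3 : i' < L := by omega
    refine le_trans (ih (by omega)) ?_
    rw [subseq_peel d W i' L h3]
    exact colSpace_mul_le _ _

lemma rowSpace_subseq_antitone (j : ℕ) :
    LinearMap.range ((subseq d W 0 (j + 1))ᵀ).mulVecLin ≤
      LinearMap.range ((subseq d W 0 j)ᵀ).mulVecLin := by
  rw [subseq_succ d W 0 j (Nat.zero_le j), Matrix.transpose_mul]
  exact colSpace_mul_le _ _

end Subseq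
end RankDmuAux
namespace RankDmuAux
open Matrix Module

section Main
variable (d : ℕ → ℕ) (W : ∀ j : ℕ, Matrix (Fin (d (j + 1))) (Fin (d j)) ℝ) (L : ℕ)

/-- column space of `W_{L∼j}` (paper index `j = j0+1`) -/
noncomputable def Uc (j : ℕ) : Submodule ℝ (Fin (d L) → ℝ) :=
  LinearMap.range (subseq d W (j + 1) L).mulVecLin

/-- row space of `W_{j∼0}` -/
noncomputable def Vr (j : ℕ) : Submodule ℝ (Fin (d 0) → ℝ) :=
  LinearMap.range ((subseq d W 0 j)ᵀ).mulVecLin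

noncomputable def TT (j : ℕ) : Submodule ℝ (Matrix (Fin (d L)) (Fin (d 0)) ℝ) :=
  Tsub (Uc d W L j) (Vr d W j)

noncomputable def SS (k : ℕ) : Submodule ℝ (Matrix (Fin (d L)) (Fin (d 0)) ℝ) :=
  ∑ j ∈ Finset.range k, TT d W L j

lemma TT_le_SS {j k : ℕ} (hj : j < k) : TT d W L j ≤ SS d W L k := by
  rw [SS, sum_submodule_eq_sup]
  exact Finset.le_sup (Finset.mem_range.mpr hj)

lemma SS_le {k : ℕ} {X : Submodule ℝ (Matrix (Fin (d L)) (Fin (d 0)) ℝ)}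
    (h : ∀ j < k, TT d W L j ≤ X) : SS d W L k ≤ X := by
  rw [SS, sum_submodule_eq_sup]
  exact Finset.sup_le fun j hj => h j (Finset.mem_range.mp hj)

lemma SS_succ (k : ℕ) : SS d W L (k + 1) = SS d W L k ⊔ TT d W L k := by
  rw [SS, SS, Finset.sum_range_succ, Submodule.add_eq_sup]

lemma finrank_TT (j : ℕ) :
    finrank ℝ (TT d W L j) = finrank ℝ (Uc d W L j) * finrank ℝ (Vr d W j) :=
  finrank_Tsub _ _

lemma finrank_SS (mm : ℕ) (hL : mm + 1 ≤ L) :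
    (finrank ℝ (SS d W L (mm + 1)) : ℤ) =
      (∑ j ∈ Finset.range (mm + 1),
          (finrank ℝ (Uc d W L j) : ℤ) * (finrank ℝ (Vr d W j) : ℤ))
        - ∑ j ∈ Finset.range mm,
            (finrank ℝ (Uc d W L j) : ℤ) * (finrank ℝ (Vr d W (j + 1)) : ℤ) := by
  induction mm with
  | zero =>
    rw [show SS d W L 1 = TT d W L 0 by rw [SS, Finset.sum_range_one]]
    rw [finrank_TT]
    push_cast
    simp
  | succ mm ih =>
    have hL' : mm + 1 ≤ L := by omega
    have hmain := Submodule.finrank_sup_add_finrank_inf_eq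
      (SS d W L (mm + 1)) (TT d W L (mm + 1))
    have hinf : SS d W L (mm + 1) ⊓ TT d W L (mm + 1)
        = Tsub (Uc d W L mm) (Vr d W (mm + 1)) := by
      apply le_antisymm
      · refine le_trans (inf_le_inf ?_ ?_) (le_of_eq Tsub_inf)
        · refine SS_le d W L fun j hj => ?_
          exact Tsub_mono (colSpace_subseq_mono d W (by omega) (by omega)) le_top
        · exact Tsub_mono le_top le_rfl
      · refine le_inf ?_ ?_
        · refine le_trans (Tsub_mono le_rfl (rowSpace_subseq_antitone d W mm))
            (TT_le_SS d W L (Nat.lt_succ_self mm))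
        · exact Tsub_mono (colSpace_subseq_mono d W (by omega) (by omega)) le_rfl
    have hinf' : finrank ℝ ↥(SS d W L (mm + 1) ⊓ TT d W L (mm + 1))
        = finrank ℝ (Uc d W L mm) * finrank ℝ (Vr d W (mm + 1)) := by
      rw [hinf]; exact finrank_Tsub _ _
    rw [SS_succ]
    have h1 := ih hL'
    have h2 := finrank_TT d W L (mm + 1)
    rw [Finset.sum_range_succ
        (fun j => (finrank ℝ (Uc d W L j) : ℤ) * (finrank ℝ (Vr d W j) : ℤ)) (mm + 1),
      Finset.sum_range_succ
        (fun j => (finrank ℝ (Uc d W L j) : ℤ) * (finrank ℝ (Vr d W (j + 1)) : ℤ)) mm]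
    have hcast : (finrank ℝ ↥(SS d W L (mm + 1) ⊔ TT d W L (mm + 1)) : ℤ)
        + (finrank ℝ (Uc d W L mm) : ℤ) * (finrank ℝ (Vr d W (mm + 1)) : ℤ)
        = (finrank ℝ ↥(SS d W L (mm + 1)) : ℤ)
          + (finrank ℝ (Uc d W L (mm + 1)) : ℤ) * (finrank ℝ (Vr d W (mm + 1)) : ℤ) := by
      have := hmain
      rw [hinf', h2] at this
      exact_mod_cast congrArg (fun x : ℕ => (x : ℤ)) this
    linarith [hcast, h1]

lemma dmu_apply (Δ : ∀ j0 : Fin L, Matrix (Fin (d (j0.1 + 1))) (Fin (d j0.1)) ℝ) :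
    dmu L d W Δ = ∑ j0 : Fin L, subseq d W (j0.1 + 1) L * Δ j0 * subseq d W 0 j0.1 := rfl

lemma range_dmu_eq_SS : LinearMap.range (dmu L d W) = SS d W L L := by
  apply le_antisymm
  · rintro x ⟨Δ, rfl⟩
    rw [dmu_apply]
    refine Submodule.sum_mem _ fun j0 _ => ?_
    refine TT_le_SS d W L j0.2 ?_
    rw [TT, Uc, Vr, ← range_conjMap]
    exact ⟨Δ j0, rfl⟩
  · refine SS_le d W L fun j hj => ?_
    rw [TT, Uc, Vr, ← range_conjMap]
    rintro x ⟨B, rfl⟩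
    classical
    refine ⟨Pi.single (⟨j, hj⟩ : Fin L) B, ?_⟩
    rw [dmu_apply]
    rw [Fintype.sum_eq_single (⟨j, hj⟩ : Fin L) (fun i hi => by
      rw [Pi.single_eq_of_ne hi, Matrix.mul_zero, Matrix.zero_mul])]
    rw [Pi.single_eq_same]
    rfl

end Main
end RankDmuAux

namespace RankDmuAux

lemma sum_Icc_shift (mm : ℕ) (f : ℕ → ℤ) :
    ∑ j ∈ Finset.Icc 1 mm, f j = ∑ j ∈ Finset.range mm, f (j + 1) := by
  induction mm with
  | zero => rw [Finset.Icc_eq_empty (by omega)]; simp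
  | succ mm ih => rw [Finset.sum_Icc_succ_top (by omega), ih, Finset.sum_range_succ]

end RankDmuAux


/-- Trager–Kohn–Bruna, Lemma 3.
The rank of the differential map `dμ(θ)` equals
`Σ_{j=1}^{L} rk W_{L∼j} · rk W_{j−1∼0} − Σ_{j=1}^{L−1} rk W_{L∼j} · rk W_{j∼0}`. -/
theorem rank_dmu (L : ℕ) (d : ℕ → ℕ)
    (W : ∀ j : ℕ, Matrix (Fin (d (j + 1))) (Fin (d j)) ℝ) :
    (Module.finrank ℝ ↥(LinearMap.range (dmu L d W)) : ℤ)
      = ∑ j0 ∈ Finset.range L,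
          ((subseq d W (j0 + 1) L).rank : ℤ) * ((subseq d W 0 j0).rank : ℤ)
        - ∑ j ∈ Finset.Icc 1 (L - 1),
            ((subseq d W j L).rank : ℤ) * ((subseq d W 0 j).rank : ℤ) := by
  classical
  have hv : ∀ j, Module.finrank ℝ (RankDmuAux.Vr d W j) = (subseq d W 0 j).rank := by
    intro j
    have h1 : Module.finrank ℝ (RankDmuAux.Vr d W j) = ((subseq d W 0 j)ᵀ).rank := rfl
    rw [h1, Matrix.rank_transpose]
  cases L with
  | zero =>
    have h0 : LinearMap.range (dmu 0 d W) = ⊥ := by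
      rw [LinearMap.range_eq_bot]
      apply LinearMap.ext
      intro Δ
      rw [RankDmuAux.dmu_apply]
      simp
    rw [h0]
    rw [Finset.Icc_eq_empty (by omega)]
    simp
  | succ mm =>
    have key := RankDmuAux.finrank_SS d W (mm + 1) mm le_rfl
    rw [RankDmuAux.range_dmu_eq_SS, key]
    congr 1
    · apply Finset.sum_congr rfl
      intro j hj
      have hu : Module.finrank ℝ (RankDmuAux.Uc d W (mm + 1) j)
          = (subseq d W (j + 1) (mm + 1)).rank := rfl
      rw [hu, hv]
    · have hmm : mm + 1 - 1 = mm := rfl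
      rw [hmm, RankDmuAux.sum_Icc_shift]
      apply Finset.sum_congr rfl
      intro j hj
      have hu : Module.finrank ℝ (RankDmuAux.Uc d W (mm + 1) j)
          = (subseq d W (j + 1) (mm + 1)).rank := rfl
      rw [hu, hv]
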